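/- For complex x₁, x₂ with Re(x₁) > 1 and Re(x₂) > 1, and real m > 0: ∫_{-∞}^{∞} m^{-x₁-it} (1/(x₂ - it - 1/2)) Γ(x₁ + it) Γ(x₂ + 1/2 - it) dt = (1/(x₁ + x₂ - 1/2)) · 2π Γ(x₁ + x₂ + 1/2) / (m+1)^{x₁+x₂-1/2}. -/

import Mathlib

open Complex Real

open MeasureTheory Set FourierTransform

noncomputable def ff (lam : ℝ) (c : ℂ) (u : ℝ) : ℂ :=
  ((Real.exp (-(lam * Real.exp (-u))) : ℝ) : ℂ) * Complex.exp (-c * u)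

lemma ff_cont (lam : ℝ) (c : ℂ) : Continuous (ff lam c) := by
  unfold ff
  fun_prop

lemma rexp_cpow (v : ℝ) (c : ℂ) : ((Real.exp v : ℝ) : ℂ) ^ c = Complex.exp (c * v) := by
  rw [Complex.ofReal_exp, Complex.cpow_def_of_ne_zero (Complex.exp_ne_zero _),
    Complex.log_exp (by simpa using Real.pi_pos) (by simp [Real.pi_pos.le]), mul_comm]

lemma point_eq {lam : ℝ} (hl : 0 < lam) (c : ℂ) (u : ℝ) :
    |(-(lam * Real.exp (-u)))| •
        (((Real.exp (-(lam * Real.exp (-u))) : ℝ) : ℂ) *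
          ((lam * Real.exp (-u) : ℝ) : ℂ) ^ (c - 1))
      = (lam : ℂ) ^ c * ff lam c u := by
  have hx : (0:ℝ) < lam * Real.exp (-u) := by positivity
  set x : ℝ := lam * Real.exp (-u) with hxdef
  have hxne : ((x : ℝ) : ℂ) ≠ 0 := by exact_mod_cast hx.ne'
  have h1 : ((x:ℝ):ℂ) ^ (c - 1) * ((x:ℝ):ℂ) = ((x:ℝ):ℂ) ^ c := by
    rw [Complex.cpow_sub _ _ hxne, Complex.cpow_one, div_mul_cancel₀]
    exact hxne
  have h2 : ((x:ℝ):ℂ) ^ c = (lam:ℂ) ^ c * Complex.exp (-c * u) := by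
    have hx2 : ((x:ℝ):ℂ) = ((lam:ℝ):ℂ) * ((Real.exp (-u) : ℝ):ℂ) := by push_cast [hxdef]; ring
    rw [hx2, mul_cpow_ofReal_nonneg hl.le (Real.exp_pos _).le, rexp_cpow]
    push_cast
    ring_nf
  rw [abs_neg, abs_of_pos hx, real_smul]
  unfold ff
  rw [show Real.exp (-(lam * Real.exp (-u))) = Real.exp (-x) from rfl]
  rw [mul_comm ((x:ℂ)) _, mul_assoc, h1, h2]
  ring

lemma cv_image {lam : ℝ} (hl : 0 < lam) :
    (fun u : ℝ => lam * Real.exp (-u)) '' univ = Ioi 0 := by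
  ext x
  simp only [image_univ, mem_range, mem_Ioi]
  constructor
  · rintro ⟨u, rfl⟩; positivity
  · intro hx
    refine ⟨-Real.log (x / lam), ?_⟩
    rw [neg_neg, Real.exp_log (by positivity)]
    field_simp

lemma cv_deriv {lam : ℝ} (u : ℝ) :
    HasDerivWithinAt (fun u : ℝ => lam * Real.exp (-u)) (-(lam * Real.exp (-u))) univ u := by
  have : HasDerivAt (fun u : ℝ => lam * Real.exp (-u)) (lam * (Real.exp (-u) * (-1))) u := by
    exact (((Real.hasDerivAt_exp (-u)).comp u ((hasDerivAt_neg u))).const_mul lam)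
  rw [hasDerivWithinAt_univ]
  rw [show -(lam * Real.exp (-u)) = lam * (Real.exp (-u) * (-1)) by ring]
  exact this

lemma cv_inj {lam : ℝ} (hl : 0 < lam) :
    InjOn (fun u : ℝ => lam * Real.exp (-u)) univ := by
  intro a _ b _ h
  simp only at h
  have := mul_left_cancel₀ hl.ne' h
  have := Real.exp_injective this
  linarith [neg_injective this]

lemma L_smul_eq {lam : ℝ} (hl : 0 < lam) (c : ℂ) {gi : ℝ → ℂ}
    (hgi : gi = fun x => ((Real.exp (-x) : ℝ) : ℂ) * ((x:ℝ):ℂ) ^ (c - 1)) (u : ℝ) :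
    |(-(lam * Real.exp (-u)))| • gi (lam * Real.exp (-u)) = (lam : ℂ) ^ c * ff lam c u := by
  rw [hgi]; exact point_eq hl c u

lemma L_int {lam : ℝ} (hl : 0 < lam) {c : ℂ} (hc : 0 < c.re) :
    Integrable (ff lam c) := by
  have key := (integrableOn_image_iff_integrableOn_abs_deriv_smul (f := fun u : ℝ => lam * Real.exp (-u))
      (f' := fun u : ℝ => -(lam * Real.exp (-u))) MeasurableSet.univ
      (fun x _ => cv_deriv x) (cv_inj hl)
      (fun x => ((Real.exp (-x) : ℝ) : ℂ) * ((x:ℝ):ℂ) ^ (c - 1))).mp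
  rw [cv_image hl] at key
  have h0 : IntegrableOn (fun x : ℝ => ((Real.exp (-x) : ℝ) : ℂ) * ((x:ℝ):ℂ) ^ (c - 1)) (Ioi 0) := by
    simpa using Complex.GammaIntegral_convergent hc
  have h1 := key h0
  rw [integrableOn_univ] at h1
  have h2 : Integrable (fun u : ℝ => (lam : ℂ) ^ c * ff lam c u) := by
    refine h1.congr (Filter.Eventually.of_forall fun u => ?_)
    exact L_smul_eq hl c rfl u
  have hlne : ((lam : ℂ) ^ c) ≠ 0 := by
    rw [Ne, Complex.cpow_eq_zero_iff]
    push_neg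
    intro h
    exact absurd (Complex.ofReal_eq_zero.mp h) hl.ne'
  have := h2.const_mul ((lam : ℂ) ^ c)⁻¹
  refine this.congr (Filter.Eventually.of_forall fun u => ?_)
  field_simp

lemma L_val {lam : ℝ} (hl : 0 < lam) {c : ℂ} (hc : 0 < c.re) :
    ∫ u : ℝ, ff lam c u = Complex.Gamma c * (lam : ℂ) ^ (-c) := by
  have key := integral_image_eq_integral_abs_deriv_smul (f := fun u : ℝ => lam * Real.exp (-u))
      (f' := fun u : ℝ => -(lam * Real.exp (-u))) MeasurableSet.univ
      (fun x _ => cv_deriv x) (cv_inj hl)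
      (fun x => ((Real.exp (-x) : ℝ) : ℂ) * ((x:ℝ):ℂ) ^ (c - 1))
  rw [cv_image hl] at key
  have hg : Complex.Gamma c = ∫ x in Ioi (0:ℝ), ((Real.exp (-x) : ℝ) : ℂ) * ((x:ℝ):ℂ) ^ (c - 1) := by
    rw [Complex.Gamma_eq_integral hc]; rfl
  have hlne : ((lam : ℂ) ^ c) ≠ 0 := by
    rw [Ne, Complex.cpow_eq_zero_iff]
    push_neg
    intro h
    exact absurd (Complex.ofReal_eq_zero.mp h) hl.ne'
  have : Complex.Gamma c = (lam : ℂ) ^ c * ∫ u : ℝ, ff lam c u := by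
    rw [hg, key, ← MeasureTheory.integral_const_mul, setIntegral_univ]
    exact integral_congr_ae (Filter.Eventually.of_forall fun u => L_smul_eq hl c rfl u)
  rw [Complex.cpow_neg, this, mul_comm ((lam:ℂ) ^ c), mul_inv_cancel_right₀ hlne]
lemma abs_Gamma_le {s : ℂ} (hs : 0 < s.re) :
    ‖Complex.Gamma s‖ ≤ Real.Gamma s.re := by
  rw [Complex.Gamma_eq_integral hs, Real.Gamma_eq_integral hs]
  have := norm_integral_le_integral_norm (μ := volume.restrict (Ioi (0:ℝ)))
    (f := fun x : ℝ => ((Real.exp (-x) : ℝ) : ℂ) * ((x:ℝ):ℂ) ^ (s - 1))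
  refine le_trans (by exact this) (le_of_eq ?_)
  refine setIntegral_congr_fun measurableSet_Ioi (fun x hx => ?_)
  simp only [norm_mul, Complex.norm_real, Real.norm_eq_abs,
    _root_.abs_of_nonneg (Real.exp_pos (-x)).le]
  rw [Complex.norm_cpow_eq_rpow_re_of_pos hx]
  simp

lemma cont_Gamma_line {a : ℂ} (ha : 0 < a.re) :
    Continuous (fun t : ℝ => Complex.Gamma (a + t * Complex.I)) := by
  rw [continuous_iff_continuousAt]
  intro t
  have h1 : ContinuousAt Complex.Gamma (a + t * Complex.I) := by
    refine (Complex.differentiableAt_Gamma _ (fun m => ?_)).continuousAt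
    intro h
    have : (a + (t:ℂ) * Complex.I).re = (-(m:ℂ)).re := by rw [h]
    simp at this
    have : (0:ℝ) ≤ m := Nat.cast_nonneg m
    linarith
  exact ContinuousAt.comp h1 (by fun_prop)

lemma Gamma_line_bound {a : ℂ} (ha : 1 < a.re) (t : ℝ) :
    ‖Complex.Gamma (a + t * Complex.I)‖ ≤
      Real.Gamma (a.re + 2) * (1 / (1 + (t + a.im) ^ 2)) := by
  set s : ℂ := a + t * Complex.I with hs
  have hre : s.re = a.re := by simp [hs]
  have him : s.im = a.im + t := by simp [hs]
  have hs0 : s ≠ 0 := by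
    intro h; rw [h] at hre; rw [Complex.zero_re] at hre; linarith
  have hs1 : s + 1 ≠ 0 := by
    intro h
    have : (s+1).re = 0 := by rw [h]; simp
    simp [hre] at this
    linarith
  have hrec : Complex.Gamma (s + 2) = (s + 1) * (s * Complex.Gamma s) := by
    rw [show s + 2 = s + 1 + 1 by ring, Complex.Gamma_add_one _ hs1,
      Complex.Gamma_add_one _ hs0]
  have habs : ‖Complex.Gamma s‖
      = ‖Complex.Gamma (s + 2)‖ / (‖s+1‖ * ‖s‖) := by
    have hA0 : ‖s‖ ≠ 0 := by simpa using hs0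
    have hB0 : ‖s+1‖ ≠ 0 := by simpa using hs1
    rw [hrec, norm_mul, norm_mul]
    field_simp
  rw [habs]
  have hnum : ‖Complex.Gamma (s + 2)‖ ≤ Real.Gamma (a.re + 2) := by
    have : (s + 2).re = a.re + 2 := by simp [hre]
    have h := abs_Gamma_le (s := s + 2) (by rw [this]; linarith)
    rwa [this] at h
  set y : ℝ := a.im + t with hy
  have hA2 : 1 + y^2 ≤ (‖s‖)^2 := by
    rw [Complex.sq_norm, Complex.normSq_apply, hre, him]
    nlinarith
  have hB2 : 1 + y^2 ≤ (‖s+1‖)^2 := by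
    have hre1 : (s+1).re = a.re + 1 := by simp [hre]
    have him1 : (s+1).im = y := by simp [hs, hy]
    rw [Complex.sq_norm, Complex.normSq_apply, hre1, him1]
    nlinarith
  have hden : 1 + (t + a.im)^2 ≤ ‖s+1‖ * ‖s‖ := by
    have hA : (0:ℝ) ≤ ‖s‖ := norm_nonneg _
    have hB : (0:ℝ) ≤ ‖s+1‖ := norm_nonneg _
    have hcpos : (0:ℝ) < 1 + y^2 := by positivity
    have key : (1 + y^2) ≤ ‖s+1‖ * ‖s‖ := by
      nlinarith [mul_nonneg hA hB, sq_nonneg (‖s+1‖ * ‖s‖ - (1+y^2)),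
        mul_le_mul hB2 hA2 (by positivity) (by positivity)]
    have : (t + a.im)^2 = y^2 := by rw [hy]; ring
    linarith [key, this.le]
  have hGnn : 0 ≤ Real.Gamma (a.re + 2) := Real.Gamma_nonneg_of_nonneg (by linarith)
  rw [mul_one_div]
  exact div_le_div₀ hGnn hnum (by positivity) hden

lemma Gamma_line_integrable {a : ℂ} (ha : 1 < a.re) :
    Integrable (fun t : ℝ => Complex.Gamma (a + t * Complex.I)) := by
  have hinv : Integrable (fun x : ℝ => 1 / (1 + x ^ 2)) := by
    simpa [one_div] using integrable_inv_one_add_sq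
  have hbd : Integrable (fun t : ℝ => Real.Gamma (a.re + 2) * (1 / (1 + (t + a.im) ^ 2))) :=
    (hinv.comp_add_right a.im).const_mul _
  refine hbd.mono' ((cont_Gamma_line (by linarith)).aestronglyMeasurable) ?_
  filter_upwards with t
  simpa using Gamma_line_bound ha t

open FourierTransform

lemma fourier_ff {a : ℂ} (ha : 0 < a.re) (ξ : ℝ) :
    𝓕 (ff 1 a) ξ = Complex.Gamma (a + (2 * π * ξ) * Complex.I) := by
  rw [Real.fourier_eq']
  have h1 : ∀ v : ℝ, Complex.exp (↑(-2 * π * (inner ℝ v ξ : ℝ)) * Complex.I) • ff 1 a v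
      = ff 1 (a + (2 * π * ξ) * Complex.I) v := by
    intro v
    have hin : (inner ℝ v ξ : ℝ) = v * ξ := by
      simp [RCLike.inner_apply, mul_comm]
    rw [smul_eq_mul, hin]
    unfold ff
    rw [mul_comm, mul_assoc, ← Complex.exp_add]
    congr 1
    push_cast
    ring
  rw [integral_congr_ae (Filter.Eventually.of_forall h1)]
  rw [L_val one_pos (by simpa using ha)]
  simp

lemma inv_formula {a : ℂ} (ha : 1 < a.re) (u : ℝ) :
    ∫ t : ℝ, Complex.Gamma (a + t * Complex.I) * Complex.exp (↑(t * u) * Complex.I)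
      = (2 * π : ℝ) * ff 1 a u := by
  have ha0 : 0 < a.re := by linarith
  have hf : Integrable (ff 1 a) := L_int one_pos ha0
  have hFf : Integrable (𝓕 (ff 1 a)) := by
    have h1 : Integrable (fun ξ : ℝ => Complex.Gamma (a + (2 * π * ξ) * Complex.I)) := by
      have := (Gamma_line_integrable ha).comp_mul_left' (R := 2 * π)
        (by positivity)
      refine this.congr (Filter.Eventually.of_forall fun ξ => ?_)
      push_cast
      ring_nf
    exact h1.congr (Filter.Eventually.of_forall fun ξ => (fourier_ff ha0 ξ).symm)
  have hinv : 𝓕⁻ (𝓕 (ff 1 a)) u = ff 1 a u :=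
    hf.fourierInv_fourier_eq hFf (ff_cont 1 a).continuousAt
  have hchg := MeasureTheory.Measure.integral_comp_mul_left
    (fun t : ℝ => Complex.Gamma (a + t * Complex.I) * Complex.exp (↑(t * u) * Complex.I)) (2 * π)
  have h2 : (∫ x : ℝ, Complex.Gamma (a + ((2 * π * x : ℝ) : ℂ) * Complex.I) *
      Complex.exp (((2 * π * x * u : ℝ) : ℂ) * Complex.I)) = 𝓕⁻ (𝓕 (ff 1 a)) u := by
    rw [Real.fourierInv_eq']
    refine integral_congr_ae (Filter.Eventually.of_forall fun ξ => ?_)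
    dsimp only
    have hin : (inner ℝ ξ u : ℝ) = ξ * u := by simp [RCLike.inner_apply, mul_comm]
    rw [hin, fourier_ff ha0, smul_eq_mul, mul_comm]
    congr 3
    · push_cast; ring
    · push_cast; ring
  rw [h2, hinv] at hchg
  have hpi : |(2 * π)⁻¹| = (2 * π)⁻¹ := abs_of_pos (by positivity)
  rw [hpi] at hchg
  rw [hchg, real_smul, ← mul_assoc]
  have hone : ((2 * π : ℝ) : ℂ) * (((2 * π)⁻¹ : ℝ) : ℂ) = 1 := by
    push_cast
    have : (2 * (π:ℂ)) ≠ 0 := by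
      simp [Complex.ofReal_ne_zero, Real.pi_ne_zero]
    field_simp
  rw [hone, one_mul]

theorem stmt6 (x₁ x₂ : ℂ) (hx₁ : 1 < x₁.re) (hx₂ : 1 < x₂.re) (m : ℝ) (hm : 0 < m) :
    ∫ t : ℝ, (m : ℂ) ^ (-x₁ - t * Complex.I) * (1 / (x₂ - t * Complex.I - 1/2)) *
        Complex.Gamma (x₁ + t * Complex.I) * Complex.Gamma (x₂ + 1/2 - t * Complex.I)
    = (1 / (x₁ + x₂ - 1/2)) * (2 * Real.pi * Complex.Gamma (x₁ + x₂ + 1/2) /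
        ((m + 1 : ℝ) : ℂ) ^ (x₁ + x₂ - 1/2)) := by
  have half_re : ((1:ℂ)/2).re = 1/2 := by norm_num
  set c' : ℂ := x₁ + x₂ - 1/2 with hc'
  have hc're : c'.re = x₁.re + x₂.re - 1/2 := by
    rw [hc', Complex.sub_re, Complex.add_re, half_re]
  have hc'pos : 0 < c'.re := by rw [hc're]; linarith
  have hc'0 : c' ≠ 0 := by
    intro h; rw [h, Complex.zero_re] at hc're; linarith [hc're]
  have hmne : ((m:ℝ):ℂ) ≠ 0 := Complex.ofReal_ne_zero.mpr hm.ne'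
  have hminv : (0:ℝ) < m⁻¹ := by positivity
  have hx2re : 0 < (x₂ - 1/2).re := by
    rw [Complex.sub_re, half_re]; linarith
  -- step 1: pointwise in t
  have step1 : ∀ t : ℝ,
      (m : ℂ) ^ (-x₁ - t * Complex.I) * (1 / (x₂ - t * Complex.I - 1/2)) *
        Complex.Gamma (x₁ + t * Complex.I) * Complex.Gamma (x₂ + 1/2 - t * Complex.I)
      = (m : ℂ) ^ (-c') * (Complex.Gamma (x₁ + t * Complex.I) *
          ∫ u : ℝ, ff m⁻¹ (x₂ - 1/2) u * Complex.exp (((t * u : ℝ) : ℂ) * Complex.I)) := by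
    intro t
    set w : ℂ := x₂ - 1/2 - t * Complex.I with hw
    have hwre : w.re = x₂.re - 1/2 := by
      rw [hw]
      simp [Complex.sub_re, half_re]
    have hwre' : 0 < w.re := by rw [hwre]; linarith
    have hw0 : w ≠ 0 := by
      intro h; rw [h, Complex.zero_re] at hwre; linarith [hwre]
    -- integral over u equals Gamma w * (m⁻¹)^(-w)
    have hIu : (∫ u : ℝ, ff m⁻¹ (x₂ - 1/2) u * Complex.exp (((t * u : ℝ) : ℂ) * Complex.I))
        = Complex.Gamma w * ((m⁻¹ : ℝ) : ℂ) ^ (-w) := by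
      rw [← L_val hminv hwre']
      refine integral_congr_ae (Filter.Eventually.of_forall fun u => ?_)
      unfold ff
      dsimp only
      rw [mul_assoc, ← Complex.exp_add]
      congr 2
      push_cast
      ring
    have hcpow : ((m⁻¹ : ℝ) : ℂ) ^ (-w) = (m : ℂ) ^ w := by
      rw [Complex.ofReal_inv, Complex.inv_cpow _ _ (by
          rw [Complex.arg_ofReal_of_nonneg hm.le]; exact Real.pi_ne_zero.symm),
        Complex.cpow_neg, inv_inv]
    have hGam : Complex.Gamma (x₂ + 1/2 - t * Complex.I) = w * Complex.Gamma w := by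
      rw [show x₂ + 1/2 - t * Complex.I = w + 1 by rw [hw]; ring, Complex.Gamma_add_one _ hw0]
    have hden : x₂ - t * Complex.I - 1/2 = w := by rw [hw]; ring
    rw [hIu, hcpow, hGam, hden]
    have hmm : (m : ℂ) ^ (-c') * (m:ℂ) ^ w = (m:ℂ) ^ (-x₁ - t * Complex.I) := by
      rw [← Complex.cpow_add _ _ hmne]
      congr 1
      rw [hc', hw]
      ring
    field_simp [hw0]
    ring_nf
    rw [← hmm]
    ring
  rw [integral_congr_ae (Filter.Eventually.of_forall step1)]
  rw [MeasureTheory.integral_const_mul]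
  -- step 2: Fubini
  set g : ℝ → ℂ := ff m⁻¹ (x₂ - 1/2) with hg
  have hgint : Integrable g := L_int hminv hx2re
  have hGint : Integrable (fun t : ℝ => Complex.Gamma (x₁ + t * Complex.I)) :=
    Gamma_line_integrable hx₁
  have hswap : (∫ t : ℝ, Complex.Gamma (x₁ + t * Complex.I) *
        ∫ u : ℝ, g u * Complex.exp (((t * u : ℝ) : ℂ) * Complex.I))
      = ∫ u : ℝ, ∫ t : ℝ, Complex.Gamma (x₁ + t * Complex.I) *
          (g u * Complex.exp (((t * u : ℝ) : ℂ) * Complex.I)) := by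
    have hint : Integrable (Function.uncurry fun (t : ℝ) (u : ℝ) =>
        Complex.Gamma (x₁ + t * Complex.I) *
          (g u * Complex.exp (((t * u : ℝ) : ℂ) * Complex.I))) (volume.prod volume) := by
      have hbd : Integrable (fun p : ℝ × ℝ =>
          ‖Complex.Gamma (x₁ + p.1 * Complex.I)‖ * ‖g p.2‖) (volume.prod volume) :=
        hGint.norm.mul_prod hgint.norm
      refine hbd.mono' ?_ ?_
      · refine Continuous.aestronglyMeasurable ?_
        refine Continuous.mul ?_ (Continuous.mul ?_ ?_)
        · exact (cont_Gamma_line (by linarith)).comp continuous_fst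
        · exact (ff_cont m⁻¹ (x₂ - 1/2)).comp continuous_snd
        · apply Complex.continuous_exp.comp
          fun_prop
      · filter_upwards with p
        rw [Function.uncurry_apply_pair, norm_mul, norm_mul]
        rw [Complex.norm_exp]
        simp
      -- g continuity used above through ff_cont by fun_prop? ensure
    calc (∫ t : ℝ, Complex.Gamma (x₁ + t * Complex.I) *
        ∫ u : ℝ, g u * Complex.exp (((t * u : ℝ) : ℂ) * Complex.I))
        = ∫ t : ℝ, ∫ u : ℝ, Complex.Gamma (x₁ + t * Complex.I) *
            (g u * Complex.exp (((t * u : ℝ) : ℂ) * Complex.I)) := by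
          refine integral_congr_ae (Filter.Eventually.of_forall fun t => ?_)
          dsimp only
          rw [MeasureTheory.integral_const_mul]
      _ = _ := MeasureTheory.integral_integral_swap hint
  rw [hswap]
  -- step 3: inner integral via Fourier inversion
  have step3 : ∀ u : ℝ, (∫ t : ℝ, Complex.Gamma (x₁ + t * Complex.I) *
        (g u * Complex.exp (((t * u : ℝ) : ℂ) * Complex.I)))
      = g u * (((2 * π : ℝ) : ℂ) * ff 1 x₁ u) := by
    intro u
    rw [← inv_formula hx₁ u, ← MeasureTheory.integral_const_mul]
    refine integral_congr_ae (Filter.Eventually.of_forall fun t => ?_)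
    ring
  rw [integral_congr_ae (Filter.Eventually.of_forall step3)]
  -- step 4: compute the u-integral
  have hprod : ∀ u : ℝ, g u * (((2 * π : ℝ) : ℂ) * ff 1 x₁ u)
      = ((2 * π : ℝ) : ℂ) * ff (m⁻¹ + 1) c' u := by
    intro u
    rw [hg]
    unfold ff
    have h1 : (↑(rexp (-(m⁻¹ * rexp (-u)))) : ℂ) * (↑(rexp (-(1 * rexp (-u)))) : ℂ)
        = (↑(rexp (-((m⁻¹ + 1) * rexp (-u)))) : ℂ) := by
      rw [← Complex.ofReal_mul, ← Real.exp_add]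
      norm_cast
      congr 1
      ring
    have h2 : Complex.exp (-(x₂ - 1/2) * u) * Complex.exp (-x₁ * u)
        = Complex.exp (-c' * u) := by
      rw [← Complex.exp_add]
      congr 1
      rw [hc']
      ring
    calc (↑(rexp (-(m⁻¹ * rexp (-u)))) * cexp (-(x₂ - 1/2) * u)) *
          (((2 * π : ℝ) : ℂ) * (↑(rexp (-(1 * rexp (-u)))) * cexp (-x₁ * u)))
        = ((2 * π : ℝ) : ℂ) * ((↑(rexp (-(m⁻¹ * rexp (-u)))) * ↑(rexp (-(1 * rexp (-u))))) *
            (cexp (-(x₂ - 1/2) * u) * cexp (-x₁ * u))) := by ring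
      _ = _ := by rw [h1, h2]
  rw [integral_congr_ae (Filter.Eventually.of_forall hprod), MeasureTheory.integral_const_mul,
    L_val (by positivity : (0:ℝ) < m⁻¹ + 1) hc'pos]
  have hsplit : ((m + 1 : ℝ) : ℂ) ^ (-c') = (m:ℂ) ^ (-c') * ((m⁻¹ + 1 : ℝ) : ℂ) ^ (-c') := by
    rw [show ((m + 1 : ℝ) : ℂ) = (((m * (m⁻¹ + 1) : ℝ)) : ℂ) by norm_cast; field_simp; ring,
      Complex.ofReal_mul]
    exact Complex.mul_cpow_ofReal_nonneg hm.le (by positivity : (0:ℝ) ≤ m⁻¹ + 1) (-c')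
  have hG : Complex.Gamma (x₁ + x₂ + 1/2) = c' * Complex.Gamma c' := by
    rw [show x₁ + x₂ + 1/2 = c' + 1 by rw [hc']; ring, Complex.Gamma_add_one _ hc'0]
  have key : (m:ℂ) ^ (-c') * (((2 * π : ℝ) : ℂ) * (Complex.Gamma c' *
        ((m⁻¹ + 1 : ℝ) : ℂ) ^ (-c')))
      = ((m + 1 : ℝ) : ℂ) ^ (-c') * (((2 * π : ℝ) : ℂ) * Complex.Gamma c') := by
    rw [hsplit]
    ring
  rw [key, hG, Complex.cpow_neg]
  have hPne : ((m + 1 : ℝ) : ℂ) ^ c' ≠ 0 := by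
    rw [Ne, Complex.cpow_eq_zero_iff]
    push_neg
    intro h
    exact absurd (Complex.ofReal_eq_zero.mp h) (by positivity)
  rw [one_div, div_eq_mul_inv]
  have hstep : (2 * (π:ℂ)) * (c' * Complex.Gamma c') * ((((m+1:ℝ):ℂ)) ^ c')⁻¹
      = c' * (((((m+1:ℝ):ℂ)) ^ c')⁻¹ * (((2 * π : ℝ):ℂ) * Complex.Gamma c')) := by
    push_cast
    ring
  rw [hstep, ← mul_assoc c'⁻¹, inv_mul_cancel₀ hc'0, one_mul]
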